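/- Let u : ℕ → ℝ be a sequence and 𝒰 a nonprincipal ultrafilter on ℕ. Let [u] denote the class of u in the ultrapower ℝ^ℕ/𝒰, suppose [u] is finite (bounded by a standard real), and let u₀ = st([u]) be its standard part. If [u] > u₀ (i.e., {n : u n > u₀} ∈ 𝒰 and [u] ≠ u₀), then u possesses a strictly decreasing subsequence. -/

import Mathlib

open Hyperreal Filter

theorem strictAnti_subsequence_of_gt_st (u : ℕ → ℝ)
    (hfin : ∃ r : ℝ, |ofSeq u| < (r : ℝ*))
    (hgt : ((st (ofSeq u) : ℝ) : ℝ*) < ofSeq u) :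
    ∃ φ : ℕ → ℕ, StrictMono φ ∧ StrictAnti (u ∘ φ) := by
  set L : ℝ := st (ofSeq u) with hL
  have hnin : ¬ Infinite (ofSeq u) := by
    obtain ⟨r, hr⟩ := hfin
    refine not_infinite_iff_exist_lt_gt.2 ⟨-r, r, ?_, (le_abs_self _).trans_lt hr⟩
    have := (abs_lt.1 hr).1
    push_cast
    exact this
  have hst : IsSt (ofSeq u) L := isSt_st' hnin
  -- key: for any b > L, and any n, there is m > n with L < u m < b
  have key : ∀ (b : ℝ), L < b → ∀ n : ℕ, ∃ m, n < m ∧ L < u m ∧ u m < b := by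
    intro b hb n
    have h1 : ∀ᶠ k in hyperfilter ℕ, L < u k := ofSeq_lt_ofSeq.1 hgt
    have h2 : ∀ᶠ k in hyperfilter ℕ, u k < b :=
      ofSeq_lt_ofSeq.1 (hst.lt (isSt_refl_real b) hb)
    have h3 : {k | L < u k ∧ u k < b} ∈ hyperfilter ℕ := (h1.and h2)
    have hinf : {k | L < u k ∧ u k < b}.Infinite := by
      intro hfinset
      exact notMem_hyperfilter_of_finite hfinset h3
    obtain ⟨m, hm, hmn⟩ := hinf.exists_gt n
    exact ⟨m, hmn, hm.1, hm.2⟩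
  have h0 : ∃ n, L < u n := ((ofSeq_lt_ofSeq.1 hgt).exists)
  obtain ⟨n0, hn0⟩ := h0
  -- build recursively
  have step : ∀ p : {n : ℕ // L < u n}, ∃ q : {n : ℕ // L < u n}, p.1 < q.1 ∧ u q.1 < u p.1 := by
    rintro ⟨n, hn⟩
    obtain ⟨m, h1, h2, h3⟩ := key (u n) hn n
    exact ⟨⟨m, h2⟩, h1, h3⟩
  choose next hnext1 hnext2 using step
  let g : ℕ → {n : ℕ // L < u n} := fun k => next^[k] ⟨n0, hn0⟩
  refine ⟨fun k => (g k).1, strictMono_nat_of_lt_succ ?_, strictAnti_nat_of_succ_lt ?_⟩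
  · intro k
    have : g (k+1) = next (g k) := Function.iterate_succ_apply' _ _ _
    rw [this]; exact hnext1 (g k)
  · intro k
    have : g (k+1) = next (g k) := Function.iterate_succ_apply' _ _ _
    simp only [Function.comp]
    rw [this]; exact hnext2 (g k)
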